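/- Let u ∈ ℝ^K with K > 1 be arbitrary. Then there exists a subset Γ ⊆ {1,…,K} such that |u(i)| ≤ 2|u(j)| for all i, j ∈ Γ and ‖u|_Γ‖₂ ≥ ‖u‖₂ / (2.5√(log₂ K)). -/

import Mathlib

noncomputable section

namespace OMP

open Matrix Finset

/-- The support of a vector, as a `Finset`. -/
def supp {n : ℕ} (x : Fin n → ℝ) : Finset (Fin n) :=
  Finset.univ.filter fun j => x j ≠ 0

/-- The Euclidean (ℓ²) norm of a vector. -/
def l2 {n : ℕ} (x : Fin n → ℝ) : ℝ := Real.sqrt (∑ j, x j ^ 2)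

/-- The ℓ^∞ norm of a vector. -/
def linf {n : ℕ} (x : Fin n → ℝ) : ℝ := ⨆ j, |x j|

/-- The standard inner product of two vectors. -/
def dotp {n : ℕ} (x y : Fin n → ℝ) : ℝ := ∑ j, x j * y j

/-- The restriction of a vector to a set of indices (zero elsewhere). -/
def restr {n : ℕ} (Γ : Finset (Fin n)) (x : Fin n → ℝ) : Fin n → ℝ :=
  fun j => if j ∈ Γ then x j else 0

/-- The restricted isometry property of order `K` with isometry constant `δ`. -/
def RIP {M N : ℕ} (K : ℕ) (Φ : Matrix (Fin M) (Fin N) ℝ) (δ : ℝ) : Prop :=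
  0 < δ ∧ δ < 1 ∧ ∀ x : Fin N → ℝ, (supp x).card ≤ K →
    (1 - δ) * l2 x ^ 2 ≤ l2 (Φ.mulVec x) ^ 2 ∧
      l2 (Φ.mulVec x) ^ 2 ≤ (1 + δ) * l2 x ^ 2

/-- The span of the columns of `Φ` indexed by `Λ`, as a submodule of Euclidean space. -/
def colSpan {M N : ℕ} (Φ : Matrix (Fin M) (Fin N) ℝ) (Λ : Finset (Fin N)) :
    Submodule ℝ (EuclideanSpace ℝ (Fin M)) :=
  Submodule.span ℝ ((fun j => (WithLp.equiv 2 (Fin M → ℝ)).symm fun i => Φ i j) '' (Λ : Set (Fin N)))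

/-- Orthogonal projection `P_Λ` onto the span of the columns of `Φ` indexed by `Λ`. -/
def projCol {M N : ℕ} (Φ : Matrix (Fin M) (Fin N) ℝ) (Λ : Finset (Fin N))
    (v : Fin M → ℝ) : Fin M → ℝ :=
  WithLp.equiv 2 (Fin M → ℝ)
    ((colSpan Φ Λ).orthogonalProjectionOnto ((WithLp.equiv 2 (Fin M → ℝ)).symm v) : EuclideanSpace ℝ (Fin M))

/-- The matrix `A_Λ = (I - P_Λ) Φ`: the columns of `Φ` orthogonalized against `colSpan Φ Λ`. -/
def Amat {M N : ℕ} (Φ : Matrix (Fin M) (Fin N) ℝ) (Λ : Finset (Fin N)) :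
    Matrix (Fin M) (Fin N) ℝ :=
  Matrix.of fun i j => Φ i j - projCol Φ Λ (fun i' => Φ i' j) i

/-- Lemma 3.7 of ROMP: existence of a regularized subset carrying a
`1/(2.5 √(log₂ K))` fraction of the energy. -/
theorem stmt11 {K : ℕ} (hK : 1 < K) (u : Fin K → ℝ) :
    ∃ Γ : Finset (Fin K), (∀ i ∈ Γ, ∀ j ∈ Γ, |u i| ≤ 2 * |u j|) ∧
      l2 (restr Γ u) ≥ l2 u / (2.5 * Real.sqrt (Real.logb 2 K)) := by
  have hKpos : (0:ℕ) < K := lt_trans one_pos hK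
  by_cases h0 : ∀ i, u i = 0
  · refine ⟨∅, by simp, ?_⟩
    have h1 : l2 u = 0 := by simp [l2, h0]
    have h2 : l2 (restr (∅ : Finset (Fin K)) u) = 0 := by simp [l2, restr]
    simp [h1, h2]
  push_neg at h0
  obtain ⟨i₁, hi₁⟩ := h0
  obtain ⟨iM, -, hiM⟩ := Finset.exists_max_image (univ : Finset (Fin K))
    (fun i => |u i|) ⟨i₁, mem_univ i₁⟩
  set M : ℝ := |u iM| with hMdef
  have hM : ∀ i, |u i| ≤ M := fun i => hiM i (mem_univ i)
  have hMpos : 0 < M := lt_of_lt_of_le (abs_pos.mpr hi₁) (hM i₁)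
  set m : ℕ := Nat.clog 2 K with hmdef
  have hm1 : 1 ≤ m := Nat.clog_pos (by norm_num) hK
  have hKle : (K:ℝ) ≤ 2 ^ m := by exact_mod_cast Nat.le_pow_clog (by norm_num) K
  have hmono : ∀ a b : ℕ, a ≤ b → M / 2 ^ b ≤ M / 2 ^ a := by
    intro a b hab
    apply div_le_div_of_nonneg_left hMpos.le (by positivity)
    exact pow_le_pow_right₀ (by norm_num) hab
  set Γf : ℕ → Finset (Fin K) :=
    fun k => univ.filter (fun i => M / 2 ^ (k+1) < |u i| ∧ |u i| ≤ M / 2 ^ k) with hΓf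
  set E : ℕ → ℝ := fun k => ∑ i ∈ Γf k, u i ^ 2 with hE
  set S : Finset (Fin K) := univ.filter (fun i => M / 2 ^ m < |u i|) with hS
  have hdkey : ∀ a b : ℕ, a < b → Disjoint (Γf a) (Γf b) := by
    intro a b h
    simp only [Finset.disjoint_left, hΓf, mem_filter]
    rintro i ⟨-, hi1, hi2⟩ ⟨-, hj1, hj2⟩
    have hle : M / 2 ^ b ≤ M / 2 ^ (a+1) := hmono _ _ (by omega)
    linarith
  have hdisj : (↑(range m) : Set ℕ).PairwiseDisjoint Γf := by
    intro a _ b _ hab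
    rcases hab.lt_or_gt with h | h
    · exact hdkey a b h
    · exact (hdkey b a h).symm
  have hUnion : (range m).biUnion Γf = S := by
    ext i
    simp only [mem_biUnion, mem_range, hΓf, hS, mem_filter, mem_univ, true_and]
    constructor
    · rintro ⟨k, hk, hi1, hi2⟩
      calc M / 2 ^ m ≤ M / 2 ^ (k+1) := hmono _ _ (by omega)
        _ < |u i| := hi1
    · intro hi
      have hex : ∃ k, M / 2 ^ (k+1) < |u i| :=
        ⟨m - 1, by rwa [Nat.sub_add_cancel hm1]⟩
      have hk₀ : M / 2 ^ (Nat.find hex + 1) < |u i| := Nat.find_spec hex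
      have hk₀m : Nat.find hex < m := by
        have h9 : Nat.find hex ≤ m - 1 :=
          Nat.find_le (show M / 2 ^ ((m-1)+1) < |u i| by
            rwa [Nat.sub_add_cancel hm1])
        omega
      refine ⟨Nat.find hex, hk₀m, hk₀, ?_⟩
      rcases Nat.eq_zero_or_pos (Nat.find hex) with hz | hpos
      · rw [hz]; simpa using hM i
      · have hmin : ¬ (M / 2 ^ ((Nat.find hex - 1) + 1) < |u i|) :=
          Nat.find_min hex (by omega)
        rw [Nat.sub_add_cancel hpos] at hmin
        linarith
  set L2 : ℝ := ∑ j, u j ^ 2 with hL2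
  have hMsq : M ^ 2 ≤ L2 := by
    rw [hMdef, sq_abs, hL2]
    exact Finset.single_le_sum (fun j _ => sq_nonneg (u j)) (mem_univ iM)
  have htail : ∑ i ∈ univ \ S, u i ^ 2 ≤ L2 / 2 := by
    have h1 : ∀ i ∈ univ \ S, u i ^ 2 ≤ (M / 2 ^ m) ^ 2 := by
      intro i hi
      rw [mem_sdiff, hS, mem_filter, not_and] at hi
      have h2 := hi.2 (mem_univ i)
      push_neg at h2
      calc u i ^ 2 = |u i| ^ 2 := (sq_abs _).symm
        _ ≤ (M / 2 ^ m) ^ 2 := by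
            apply pow_le_pow_left₀ (abs_nonneg _) h2
    calc ∑ i ∈ univ \ S, u i ^ 2 ≤ ∑ _i ∈ univ \ S, (M / 2 ^ m) ^ 2 :=
          Finset.sum_le_sum h1
      _ = (univ \ S).card * (M / 2 ^ m) ^ 2 := by rw [Finset.sum_const, nsmul_eq_mul]
      _ ≤ K * (M / 2 ^ m) ^ 2 := by
          apply mul_le_mul_of_nonneg_right _ (by positivity)
          exact_mod_cast le_trans (Finset.card_le_card Finset.sdiff_subset) (by simp)
      _ = K * M ^ 2 / (2 ^ m) ^ 2 := by ring
      _ ≤ K * M ^ 2 / ((K:ℝ) * K) := by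
          apply div_le_div_of_nonneg_left (by positivity) (by positivity)
          calc (K:ℝ) * K ≤ 2 ^ m * 2 ^ m :=
                mul_le_mul hKle hKle (Nat.cast_nonneg K) (by positivity)
            _ = (2 ^ m) ^ 2 := (sq _).symm
      _ = M ^ 2 / K := by
          have hK0 : (K:ℝ) ≠ 0 := by positivity
          field_simp
      _ ≤ L2 / 2 := by
          have h2K : (2:ℝ) ≤ K := by
            have : 2 ≤ K := hK
            exact_mod_cast this
          apply div_le_div₀ (by positivity) hMsq (by norm_num) h2K
  have hSsum : ∑ k ∈ range m, E k = ∑ i ∈ S, u i ^ 2 := by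
    rw [← hUnion, Finset.sum_biUnion hdisj]
  have hsplit : ∑ i ∈ univ \ S, u i ^ 2 + ∑ i ∈ S, u i ^ 2 = L2 :=
    Finset.sum_sdiff (Finset.subset_univ S)
  have hSbig : L2 / 2 ≤ ∑ k ∈ range m, E k := by
    rw [hSsum]; linarith
  obtain ⟨k, hkm, hkmax⟩ := Finset.exists_max_image (range m) E ⟨0, mem_range.mpr hm1⟩
  have hEk : L2 / 2 ≤ m * E k := by
    calc L2 / 2 ≤ ∑ j ∈ range m, E j := hSbig
      _ ≤ ∑ _j ∈ range m, E k := Finset.sum_le_sum fun j hj => hkmax j hj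
      _ = m * E k := by rw [Finset.sum_const, card_range, nsmul_eq_mul]
  refine ⟨Γf k, ?_, ?_⟩
  · intro i hi j hj
    rw [hΓf, mem_filter] at hi hj
    have h1 : |u i| ≤ M / 2 ^ k := hi.2.2
    have h2 : M / 2 ^ (k+1) < |u j| := hj.2.1
    have h3 : M / 2 ^ k = 2 * (M / 2 ^ (k+1)) := by
      rw [pow_succ]; ring
    linarith
  · have hlogK : (1:ℝ) ≤ Real.logb 2 K := by
      rw [show (1:ℝ) = Real.logb 2 2 from (Real.logb_self_eq_one (by norm_num)).symm]
      exact Real.logb_le_logb_of_le (by norm_num) (by norm_num)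
        (by have h9 : 2 ≤ K := hK; exact_mod_cast h9)
    have hmle : (m:ℝ) ≤ 2 * Real.logb 2 K := by
      have h1 : (2:ℝ) ^ (m - 1 : ℕ) < K := by
        exact_mod_cast Nat.pow_pred_clog_lt_self (by norm_num) hK
      have h2 : Real.logb 2 ((2:ℝ) ^ (m - 1 : ℕ)) < Real.logb 2 K :=
        Real.logb_lt_logb (by norm_num) (by positivity) h1
      rw [Real.logb_pow, Real.logb_self_eq_one (by norm_num), mul_one] at h2
      have h3 : ((m - 1 : ℕ) : ℝ) = (m:ℝ) - 1 := by
        push_cast [Nat.cast_sub hm1]; ring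
      rw [h3] at h2
      linarith
    have hrestr : l2 (restr (Γf k) u) = Real.sqrt (E k) := by
      rw [l2, hE]
      congr 1
      have hident : ∀ j : Fin K, restr (Γf k) u j ^ 2
          = if j ∈ Γf k then u j ^ 2 else 0 := by
        intro j
        rw [restr]
        split <;> simp
      simp_rw [hident]
      rw [Finset.sum_ite_mem, Finset.univ_inter]
    have hEknn : 0 ≤ E k := Finset.sum_nonneg fun i _ => sq_nonneg _
    have hL2nn : 0 ≤ L2 := Finset.sum_nonneg fun i _ => sq_nonneg _
    have hmpos : (0:ℝ) < m := by exact_mod_cast hm1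
    have hkey : L2 / (6.25 * Real.logb 2 K) ≤ E k := by
      have h1 : L2 / (6.25 * Real.logb 2 K) ≤ L2 / (2 * m) :=
        div_le_div_of_nonneg_left hL2nn (by positivity) (by linarith)
      have h2 : L2 / (2 * m) ≤ E k := by
        rw [div_le_iff₀ (by positivity)]
        linarith
      linarith
    have hl2u : l2 u = Real.sqrt L2 := rfl
    rw [ge_iff_le, hrestr, hl2u]
    rw [show (2.5 : ℝ) * Real.sqrt (Real.logb 2 K)
        = Real.sqrt (6.25 * Real.logb 2 K) by
      rw [Real.sqrt_mul (by norm_num), show Real.sqrt 6.25 = 2.5 by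
        rw [show (6.25:ℝ) = 2.5 ^ 2 by norm_num, Real.sqrt_sq (by norm_num)]]]
    rw [← Real.sqrt_div hL2nn]
    exact Real.sqrt_le_sqrt hkey

end OMP
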